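/- Let X be a random variable taking values in the non-negative integers such that m := E(X) is a positive integer. Then the sum over i from 1 to m of (P(X ≤ m−i) − P(X ≥ m+i)) is non-negative. -/

import Mathlib

open MeasureTheory
open scoped ProbabilityTheory NNReal

theorem stmt1 {Ω : Type*} [MeasureSpace Ω] [IsProbabilityMeasure (ℙ : Measure Ω)]
    (X : Ω → ℕ) (hX : Measurable X) (hint : Integrable (fun ω => (X ω : ℝ)))
    (m : ℕ) (hm : 0 < m) (hmean : (∫ ω, (X ω : ℝ)) = m) :
    0 ≤ ∑ i ∈ Finset.Icc 1 m,
      ((ℙ {ω | X ω ≤ m - i}).toReal - (ℙ {ω | m + i ≤ X ω}).toReal) := by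
  classical
  set p : ℕ → ℝ := fun k => (ℙ {ω | k ≤ X ω}).toReal with hp
  have hmeas : ∀ k, MeasurableSet {ω | k ≤ X ω} := fun k =>
    hX measurableSet_Ici
  -- key bound: partial sums of tail probabilities are ≤ m
  have key : ∀ n : ℕ, ∑ k ∈ Finset.Ioc 0 n, p k ≤ m := by
    intro n
    rw [← hmean]
    have hind : ∀ k : ℕ, Integrable
        (fun ω => Set.indicator {ω | k ≤ X ω} (fun _ => (1:ℝ)) ω) := by
      intro k
      exact (integrable_const (1:ℝ)).indicator (hmeas k)
    have h1 : ∑ k ∈ Finset.Ioc 0 n, p k =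
        ∫ ω, ∑ k ∈ Finset.Ioc 0 n,
          Set.indicator {ω | k ≤ X ω} (fun _ => (1:ℝ)) ω := by
      rw [integral_finset_sum _ (fun k _ => hind k)]
      refine Finset.sum_congr rfl fun k _ => ?_
      rw [hp]
      rw [show (fun (_ : Ω) => (1:ℝ)) = (1 : Ω → ℝ) from rfl,
        integral_indicator_one (hmeas k), measureReal_def]
    rw [h1]
    refine integral_mono (integrable_finset_sum _ (fun k _ => hind k)) hint ?_
    intro ω
    simp only [Set.indicator_apply, Set.mem_setOf_eq]
    calc ∑ k ∈ Finset.Ioc 0 n, (if k ≤ X ω then (1:ℝ) else 0)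
        = ((Finset.Ioc 0 n).filter (fun k => k ≤ X ω)).card := by
          rw [Finset.sum_boole]
      _ ≤ (X ω : ℝ) := by
          have : (Finset.Ioc 0 n).filter (fun k => k ≤ X ω) ⊆ Finset.Ioc 0 (X ω) := by
            intro k hk
            simp only [Finset.mem_filter, Finset.mem_Ioc] at hk ⊢
            exact ⟨hk.1.1, hk.2⟩
          have hcard := Finset.card_le_card this
          rw [Nat.card_Ioc] at hcard
          exact_mod_cast hcard.trans (Nat.sub_le _ _)
  -- rewrite the CDF terms
  have hq : ∀ j : ℕ, (ℙ {ω | X ω ≤ j}).toReal = 1 - p (j+1) := by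
    intro j
    have hset : {ω | X ω ≤ j} = {ω | j+1 ≤ X ω}ᶜ := by
      ext ω; simp only [Set.mem_setOf_eq, Set.mem_compl_iff, not_le]; omega
    rw [hset, prob_compl_eq_one_sub (hmeas (j+1)), hp,
      ENNReal.toReal_sub_of_le prob_le_one ENNReal.one_ne_top, ENNReal.toReal_one]
  have hsum : ∑ i ∈ Finset.Icc 1 m,
      ((ℙ {ω | X ω ≤ m - i}).toReal - (ℙ {ω | m + i ≤ X ω}).toReal)
      = m - ∑ k ∈ Finset.Ioc 0 (2*m), p k := by
    have hsplit : ∑ k ∈ Finset.Ioc 0 m, p k + ∑ k ∈ Finset.Ioc m (2*m), p k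
        = ∑ k ∈ Finset.Ioc 0 (2*m), p k :=
      Finset.sum_Ioc_consecutive _ (Nat.zero_le m) (by omega)
    have e1 : ∑ i ∈ Finset.Icc 1 m, (ℙ {ω | X ω ≤ m - i}).toReal
        = m - ∑ k ∈ Finset.Ioc 0 m, p k := by
      have : ∑ i ∈ Finset.Icc 1 m, (ℙ {ω | X ω ≤ m - i}).toReal
          = ∑ i ∈ Finset.Icc 1 m, (1 - p (m - i + 1)) := by
        refine Finset.sum_congr rfl fun i _ => hq _
      rw [this, Finset.sum_sub_distrib, Finset.sum_const, Nat.card_Icc]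
      simp only [Nat.add_sub_cancel, nsmul_eq_mul, mul_one]
      congr 1
      -- reindex: ∑ i ∈ Icc 1 m, p (m - i + 1) = ∑ k ∈ Ioc 0 m, p k
      rw [show Finset.Icc 1 m = Finset.Ico 1 (m+1) by rw [Finset.Ico_add_one_right_eq_Icc],
        show Finset.Ioc 0 m = Finset.Ico 1 (m+1) by
          rw [Finset.Ico_add_one_right_eq_Icc, ← Finset.Icc_add_one_left_eq_Ioc, Nat.zero_add]]
      rw [Finset.sum_Ico_eq_sum_range, Finset.sum_Ico_eq_sum_range]
      simp only [Nat.add_sub_cancel]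
      rw [← Finset.sum_range_reflect]
      refine Finset.sum_congr rfl fun j hj => ?_
      simp only [Finset.mem_range] at hj
      congr 1
      omega
    have e2 : ∑ i ∈ Finset.Icc 1 m, (ℙ {ω | m + i ≤ X ω}).toReal
        = ∑ k ∈ Finset.Ioc m (2*m), p k := by
      rw [show Finset.Ioc m (2*m) = Finset.Ico (m+1) (2*m+1) by
          rw [Finset.Ico_add_one_right_eq_Icc, Finset.Icc_add_one_left_eq_Ioc],
        show Finset.Icc 1 m = Finset.Ico 1 (m+1) by rw [Finset.Ico_add_one_right_eq_Icc]]
      rw [Finset.sum_Ico_eq_sum_range, Finset.sum_Ico_eq_sum_range]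
      have : 2*m+1 - (m+1) = m+1-1 := by omega
      rw [this]
      refine Finset.sum_congr rfl fun j hj => ?_
      have h' : m + (1 + j) = m + 1 + j := by omega
      rw [h', hp]
    rw [Finset.sum_sub_distrib, e1, e2, ← hsplit]
    ring
  rw [hsum]
  linarith [key (2*m)]
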